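/- For every unit vector ψ ∈ L²(X) and every ε > 0, there is a unit vector ψ̃ ∈ L²(X) that is nonzero almost everywhere and such that for every measurable set F ⊆ X, |∫_F |ψ|² − ∫_F |ψ̃|²| < ε. That is, one can give any wave function full support while changing all epistemic probabilities by less than ε, uniformly over measurable events. -/

import Mathlib

open MeasureTheory

/-- Any unit wave function can be given full support while changing all epistemic
probabilities by less than ε, uniformly over measurable events. -/
theorem stmt_6 {X : Type*} [MeasurableSpace X] (μ : Measure X) [SigmaFinite μ]
    (ψ : X → ℂ) (hψ : MemLp ψ 2 μ) (hψ1 : ∫ x, ‖ψ x‖ ^ 2 ∂μ = 1)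
    (ε : ℝ) (hε : 0 < ε) :
    ∃ ψt : X → ℂ, MemLp ψt 2 μ ∧ (∫ x, ‖ψt x‖ ^ 2 ∂μ = 1) ∧
      (∀ᵐ x ∂μ, ψt x ≠ 0) ∧
      ∀ F : Set X, MeasurableSet F →
        |(∫ x in F, ‖ψ x‖ ^ 2 ∂μ) - ∫ x in F, ‖ψt x‖ ^ 2 ∂μ| < ε := by
  classical
  have hm := hψ.aestronglyMeasurable
  set φ : X → ℂ := hm.mk ψ with hφdef
  have hφsm : StronglyMeasurable φ := hm.stronglyMeasurable_mk
  have hφmeas : Measurable φ := hφsm.measurable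
  have hφae : ψ =ᵐ[μ] φ := hm.ae_eq_mk
  have hφℒ : MemLp φ 2 μ := hψ.ae_eq hφae
  have hsq : ∀ F : Set X, (∫ x in F, ‖ψ x‖ ^ 2 ∂μ) = ∫ x in F, ‖φ x‖ ^ 2 ∂μ := fun F =>
    integral_congr_ae ((ae_restrict_of_ae hφae).mono fun x hx => by dsimp only; rw [hx])
  have hsqX : (∫ x, ‖φ x‖ ^ 2 ∂μ) = 1 := by
    rw [← hψ1]
    exact (integral_congr_ae (hφae.mono fun x hx => by rw [hx])).symm
  have hint : Integrable (fun x => ‖φ x‖ ^ 2) μ :=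
    (memLp_two_iff_integrable_sq_norm hφsm.aestronglyMeasurable).1 hφℒ
  -- a positive integrable function
  obtain ⟨g, gpos, gmeas, gint⟩ := exists_pos_lintegral_lt_of_sigmaFinite μ (ε := 1) one_ne_zero
  set f : X → ℝ := fun x => (g x : ℝ) with hfdef
  have hfpos : ∀ x, 0 < f x := fun x => gpos x
  have hfmeas : Measurable f := gmeas.coe_nnreal_real
  have hfint : Integrable f μ := by
    refine ⟨hfmeas.aestronglyMeasurable, ?_⟩
    simpa [HasFiniteIntegral, hfdef, NNReal.nnnorm_eq] using gint.trans_le le_top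
  set Z : Set X := {x | φ x = 0} with hZdef
  have hZ : MeasurableSet Z := hφmeas (measurableSet_singleton 0)
  set c : ℝ := ∫ x in Z, f x ∂μ with hcdef
  have hc0 : 0 ≤ c := setIntegral_nonneg hZ fun x _ => (hfpos x).le
  rcases hc0.lt_or_eq with hc | hc
  · -- main case: μ Z > 0 essentially; blend in a bump on Z
    set δ : ℝ := min (ε / 2) (1 / 2) with hδdef
    have hδpos : 0 < δ := lt_min (by linarith) (by norm_num)
    have hδlt1 : δ < 1 := (min_le_right _ _).trans_lt (by norm_num)
    have hδε : δ < ε := (min_le_left _ _).trans_lt (by linarith)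
    set ψt : X → ℂ := fun x =>
      if φ x = 0 then ((Real.sqrt (δ * f x / c) : ℝ) : ℂ)
      else ((Real.sqrt (1 - δ) : ℝ) : ℂ) * φ x with hψtdef
    have hpt : ∀ x, ‖ψt x‖ ^ 2
        = (1 - δ) * ‖φ x‖ ^ 2 + Z.indicator (fun y => δ * f y / c) x := by
      intro x
      by_cases h : φ x = 0
      · have hxZ : x ∈ Z := h
        have hnn : 0 ≤ δ * f x / c := by positivity
        simp only [hψtdef, h, if_true, Set.indicator_of_mem hxZ, hZdef]
        rw [Complex.norm_real, Real.norm_eq_abs, sq_abs, Real.sq_sqrt hnn]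
        simp [h]
      · have hxZ : x ∉ Z := h
        simp only [hψtdef, h, if_false, Set.indicator_of_notMem hxZ, add_zero]
        rw [norm_mul, mul_pow, Complex.norm_real, Real.norm_eq_abs, sq_abs,
          Real.sq_sqrt (by linarith : (0:ℝ) ≤ 1 - δ)]
    have hind_int : Integrable (fun y => Z.indicator (fun y => δ * f y / c) y) μ := by
      exact ((hfint.const_mul δ).div_const c).indicator hZ
    have hψt_int : Integrable (fun x => ‖ψt x‖ ^ 2) μ := by
      refine (((hint.const_mul (1 - δ)).add hind_int).congr ?_)
      exact ae_of_all _ fun x => (hpt x).symm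
    have hψtmeas : Measurable ψt := by
      refine Measurable.ite hZ ?_ ?_
      · exact Complex.measurable_ofReal.comp
          (Real.continuous_sqrt.measurable.comp ((hfmeas.const_mul δ).div_const c))
      · exact measurable_const.mul hφmeas
    have key : ∀ F : Set X, MeasurableSet F →
        (∫ x in F, ‖ψt x‖ ^ 2 ∂μ)
          = (1 - δ) * (∫ x in F, ‖φ x‖ ^ 2 ∂μ) + δ * (∫ x in F ∩ Z, f x ∂μ) / c := by
      intro F hF
      have h1 : (∫ x in F, ‖ψt x‖ ^ 2 ∂μ)
          = ∫ x in F, ((1 - δ) * ‖φ x‖ ^ 2 + Z.indicator (fun y => δ * f y / c) x) ∂μ :=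
        integral_congr_ae (ae_of_all _ fun x => hpt x)
      rw [h1, integral_add ((hint.const_mul (1 - δ)).integrableOn)
            (hind_int.integrableOn), integral_const_mul]
      congr 1
      rw [setIntegral_indicator hZ]
      rw [show (fun y => δ * f y / c) = fun y => (δ / c) * f y by
        funext y; ring]
      rw [integral_const_mul]
      ring
    have hB : (∫ x in Set.univ ∩ Z, f x ∂μ) = c := by rw [Set.univ_inter]
    refine ⟨ψt, ?_, ?_, ?_, ?_⟩
    · exact (memLp_two_iff_integrable_sq_norm hψtmeas.aestronglyMeasurable).2 hψt_int
    · have := key Set.univ MeasurableSet.univ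
      simp only [setIntegral_univ, Set.univ_inter] at this
      rw [this, hsqX]
      field_simp
      rw [← hcdef]; ring
    · refine ae_of_all _ fun x => ?_
      by_cases h : φ x = 0
      · have : 0 < Real.sqrt (δ * f x / c) :=
          Real.sqrt_pos.2 (div_pos (mul_pos hδpos (hfpos x)) hc)
        simp only [hψtdef, h, if_true]
        exact_mod_cast (Complex.ofReal_ne_zero.2 this.ne')
      · simp only [hψtdef, h, if_false]
        refine mul_ne_zero ?_ h
        exact_mod_cast Complex.ofReal_ne_zero.2
          (Real.sqrt_pos.2 (by linarith : (0:ℝ) < 1 - δ)).ne'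
    · intro F hF
      rw [hsq F, key F hF]
      set A : ℝ := ∫ x in F, ‖φ x‖ ^ 2 ∂μ with hAdef
      set B : ℝ := ∫ x in F ∩ Z, f x ∂μ with hBdef
      have hA0 : 0 ≤ A := setIntegral_nonneg hF fun x _ => by positivity
      have hA1 : A ≤ 1 := by
        rw [← hsqX]
        exact setIntegral_le_integral hint (ae_of_all _ fun x => by positivity)
      have hB0 : 0 ≤ B := setIntegral_nonneg (hF.inter hZ) fun x _ => (hfpos x).le
      have hBc : B ≤ c :=
        setIntegral_mono_set hfint.integrableOn
          (ae_of_all _ fun x => (hfpos x).le)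
          (HasSubset.Subset.eventuallyLE Set.inter_subset_right)
      have hBc1 : B / c ≤ 1 := by
        rw [div_le_one hc]; exact hBc
      have hBc0 : 0 ≤ B / c := div_nonneg hB0 hc0
      have : A - ((1 - δ) * A + δ * B / c) = δ * (A - B / c) := by ring
      rw [this, abs_mul, abs_of_pos hδpos]
      calc δ * |A - B / c| ≤ δ * 1 := by
            refine mul_le_mul_of_nonneg_left ?_ hδpos.le
            rw [abs_le]; constructor <;> linarith
        _ = δ := mul_one δ
        _ < ε := hδε
  · -- degenerate case: μ Z = 0, take ψt = φ
    have hμZ : μ Z = 0 := by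
      by_contra h
      have hpos : 0 < ∫ x in Z, f x ∂μ := by
        rw [setIntegral_pos_iff_support_of_nonneg_ae
          (ae_of_all _ fun x => (hfpos x).le) hfint.integrableOn]
        have hsupp : Function.support f = Set.univ := by
          ext x; simp [Function.support, (hfpos x).ne']
        rw [hsupp, Set.univ_inter]
        exact pos_iff_ne_zero.mpr h
      exact absurd hc.symm hpos.ne'
    refine ⟨φ, hφℒ, hsqX, ?_, ?_⟩
    · refine (measure_eq_zero_iff_ae_notMem.mp hμZ).mono fun x hx => ?_
      simpa [hZdef] using hx
    · intro F hF
      rw [hsq F]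
      simpa using hε
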